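/- Let H and K be bounded self-adjoint operators on a complex Hilbert space with K = H - (·,u)u for some vector u (i.e., K is a rank-one perturbation of H by -(·,u)u). For s > 0, let E_H = Ker(H - s²I) and E_K = Ker(K - s²I). If u is not orthogonal to E_H, then u is orthogonal to E_K and E_K = E_H ∩ u^⊥. -/

import Mathlib

open ComplexConjugate

/-- If `K = H - (·,u)u` are bounded self-adjoint operators, `s > 0`,
`E_H = Ker(H - s²I)`, `E_K = Ker(K - s²I)`, and `u` is not orthogonal to `E_H`,
then `u ⟂ E_K` and `E_K = E_H ∩ u^⊥`. -/
theorem schmidt_rank_one_H_dominant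
    {E : Type*} [NormedAddCommGroup E] [InnerProductSpace ℂ E] [CompleteSpace E]
    (H K : E →L[ℂ] E) (hHsa : IsSelfAdjoint H) (hKsa : IsSelfAdjoint K) (u : E)
    (hrank1 : ∀ f : E, K f = H f - (inner ℂ u f : ℂ) • u)
    (s : ℝ) (hs : 0 < s)
    (hdom : ∃ f : E, H f = ((s : ℂ) ^ 2) • f ∧ (inner ℂ u f : ℂ) ≠ 0) :
    (∀ g : E, K g = ((s : ℂ) ^ 2) • g → (inner ℂ u g : ℂ) = 0) ∧
    (∀ g : E, K g = ((s : ℂ) ^ 2) • g ↔ (H g = ((s : ℂ) ^ 2) • g ∧ (inner ℂ u g : ℂ) = 0)) := by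
  obtain ⟨f, hf, hfu⟩ := hdom
  have key : ∀ g : E, K g = ((s : ℂ) ^ 2) • g → (inner ℂ u g : ℂ) = 0 := by
    intro g hg
    have hHg : H g = ((s : ℂ) ^ 2) • g + (inner ℂ u g : ℂ) • u := by
      have := hrank1 g
      rw [hg] at this
      linear_combination (norm := module) -this
    have hsym : (inner ℂ (H f) g : ℂ) = inner ℂ f (H g) := hHsa.isSymmetric f g
    rw [hf, hHg] at hsym
    rw [inner_smul_left, inner_add_right, inner_smul_right, inner_smul_right] at hsym
    have hconj : (starRingEnd ℂ) ((s:ℂ)^2) = (s:ℂ)^2 := by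
      simp [← Complex.ofReal_pow]
    rw [hconj] at hsym
    have h0 : (inner ℂ u g : ℂ) * inner ℂ f u = 0 := by linear_combination -hsym
    have hfu' : (inner ℂ f u : ℂ) ≠ 0 := fun h =>
      hfu (by rw [← inner_conj_symm u f, h, map_zero])
    exact (mul_eq_zero.mp h0).resolve_right hfu'
  refine ⟨key, fun g => ⟨fun hg => ?_, fun ⟨h1, h2⟩ => ?_⟩⟩
  · have h2 := key g hg
    have := hrank1 g
    rw [hg, h2] at this
    constructor
    · linear_combination (norm := module) -this
    · exact h2
  · rw [hrank1 g, h1, h2]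
    simp
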